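/- Let n, m, t be positive integers with t ≤ n, and let f = (f₁,…,f_m) : 𝔽₂ⁿ → 𝔽₂^m be a multi-output Boolean function. Then f is a t-th order correlation-immune function if and only if for every nonzero v ∈ 𝔽₂^m and every permutation π of {1,…,n}, ℱ_{π·(v·f)}(2^{n−t}) = ∑_{k=0}^{2ⁿ−1} (−1)^{(π·(v·f))(k)} ξ^{−k·2^{n−t}} = 0, where v·f = ∑_{i=1}^m v_i f_i (mod 2) is the component Boolean function determined by v, (π·g)(x₁,…,x_n) = g(x_{π(1)},…,x_{π(n)}), ξ = exp(2π√−1/2ⁿ), and g(k) means g evaluated at the binary expansion of k with k = ∑_j x_j 2^{j−1}. -/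

import Mathlib

noncomputable section

open Finset

/-- Inner product modulo 2 on `𝔽₂ⁿ`. -/
def dotp {n : ℕ} (c x : Fin n → ZMod 2) : ZMod 2 := ∑ j, c j * x j

/-- Hamming weight of a vector in `𝔽₂ⁿ`. -/
def wt {n : ℕ} (c : Fin n → ZMod 2) : ℕ := (Finset.univ.filter fun j => c j ≠ 0).card

/-- `f` is `t`-th order correlation-immune: fixing any `t` coordinates does not
change the output distribution (counting form). -/
def CI {n : ℕ} {A : Type*} (t : ℕ) (f : (Fin n → ZMod 2) → A) : Prop :=
  ∀ S : Finset (Fin n), S.card = t → ∀ a : Fin n → ZMod 2, ∀ α : A,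
    2 ^ t * Nat.card {x : Fin n → ZMod 2 // f x = α ∧ ∀ j ∈ S, x j = a j}
      = Nat.card {x : Fin n → ZMod 2 // f x = α}

/-- Binary expansion of `k` as a vector in `𝔽₂ⁿ`, `k = ∑ x_j 2^j`. -/
def bin (n k : ℕ) : Fin n → ZMod 2 := fun j => ((k / 2 ^ (j : ℕ)) % 2 : ℕ)

/-- `ω i = exp(2π√-1 / 2^i)`, a primitive `2^i`-th root of unity in `ℂ`. -/
def ω (i : ℕ) : ℂ := Complex.exp (2 * Real.pi * Complex.I / 2 ^ i)

/-! ### Auxiliary machinery -/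

section Aux

/-! #### Binary expansions -/

def btn {n : ℕ} (x : Fin n → ZMod 2) : ℕ := ∑ j, (x j).val * 2 ^ (j : ℕ)

lemma bin_apply (n k : ℕ) (j : Fin n) : (bin n k j).val = (k / 2 ^ (j:ℕ)) % 2 := by
  simp [bin, ZMod.val_natCast, Nat.mod_mod_of_dvd]

lemma div_mod_mod {j t : ℕ} (k : ℕ) (h : j < t) :
    (k % 2 ^ t) / 2 ^ j % 2 = k / 2 ^ j % 2 := by
  conv_rhs => rw [← Nat.div_add_mod k (2 ^ t)]
  have e : 2 ^ t * (k / 2 ^ t) = 2 ^ j * (2 ^ (t - j) * (k / 2 ^ t)) := by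
    rw [← mul_assoc, ← pow_add]; congr 2; omega
  rw [e, Nat.mul_add_div (by positivity)]
  have e2 : 2 ^ (t - j) * (k / 2 ^ t) = 2 * (2 ^ (t - j - 1) * (k / 2 ^ t)) := by
    rw [← mul_assoc]; congr 1; rw [← pow_succ']; congr 1; omega
  rw [e2, Nat.mul_add_mod]

lemma bin_mod {n k : ℕ} (j : Fin n) : bin n (k % 2 ^ n) j = bin n k j := by
  have := div_mod_mod (j := (j:ℕ)) (t := n) k j.isLt
  simp [bin, this]

lemma btn_lt {n : ℕ} (x : Fin n → ZMod 2) : btn x < 2 ^ n := by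
  induction n with
  | zero => simp [btn]
  | succ n ih =>
    have h : btn x = btn (fun j : Fin n => x j.castSucc) + (x (Fin.last n)).val * 2 ^ n := by
      simp [btn, Fin.sum_univ_castSucc]
    have h2 := ih (fun j : Fin n => x j.castSucc)
    have h3 : (x (Fin.last n)).val < 2 := (x (Fin.last n)).val_lt
    rw [h, pow_succ]; nlinarith

lemma btn_bin {n k : ℕ} (hk : k < 2 ^ n) : btn (bin n k) = k := by
  induction n generalizing k with
  | zero => interval_cases k; simp [btn]
  | succ n ih =>
    have h : btn (bin (n+1) k) = btn (fun j : Fin n => bin (n+1) k j.castSucc) + (bin (n+1) k (Fin.last n)).val * 2 ^ n := by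
      simp [btn, Fin.sum_univ_castSucc]
    have e1 : (fun j : Fin n => bin (n+1) k j.castSucc) = bin n (k % 2 ^ n) := by
      funext j
      have h2 := div_mod_mod (j := (j:ℕ)) (t := n) k j.isLt
      simp [bin, Fin.coe_castSucc, h2]
    have e2 : (bin (n+1) k (Fin.last n)).val = k / 2 ^ n := by
      rw [bin_apply]
      simp only [Fin.val_last]
      have : k / 2 ^ n < 2 := by
        rw [Nat.div_lt_iff_lt_mul (by positivity)]
        calc k < 2 ^ (n+1) := hk
          _ = 2 * 2 ^ n := pow_succ' 2 n
      exact Nat.mod_eq_of_lt this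
    rw [h, e1, e2, ih (Nat.mod_lt _ (by positivity))]
    conv_rhs => rw [← Nat.div_add_mod k (2 ^ n)]
    ring

def btnF {n : ℕ} (x : Fin n → ZMod 2) : Fin (2 ^ n) := ⟨btn x, btn_lt x⟩

lemma btnF_bij {n : ℕ} : Function.Bijective (btnF (n := n)) := by
  rw [Fintype.bijective_iff_surjective_and_card]
  constructor
  · intro k
    exact ⟨bin n k, by simp [btnF, btn_bin k.isLt]⟩
  · simp

lemma bin_btn {n : ℕ} (x : Fin n → ZMod 2) : bin n (btn x) = x := by
  have : btnF (bin n (btn x)) = btnF x := by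
    simp [btnF, btn_bin (btn_lt x)]
  exact btnF_bij.injective this

lemma mod_eq_btn {t n : ℕ} (htn : t ≤ n) (k : ℕ) :
    k % 2 ^ t = btn (fun j : Fin t => bin n k (Fin.castLE htn j)) := by
  have e : (fun j : Fin t => bin n k (Fin.castLE htn j)) = bin t (k % 2 ^ t) := by
    funext j
    have h1 : bin n k (Fin.castLE htn j) = bin t k j := by
      simp [bin, Fin.coe_castLE]
    rw [h1, bin_mod]
  rw [e, btn_bin (Nat.mod_lt _ (by positivity))]

lemma sum_bin {n : ℕ} {β : Type*} [AddCommMonoid β] (F : (Fin n → ZMod 2) → β) :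
    ∑ k ∈ Finset.range (2 ^ n), F (bin n k) = ∑ x : Fin n → ZMod 2, F x := by
  apply Finset.sum_nbij' (i := fun k => bin n k) (j := fun x => btn x)
  · intro k _; exact Finset.mem_univ _
  · intro x _; exact Finset.mem_range.mpr (btn_lt x)
  · intro k hk; exact btn_bin (Finset.mem_range.mp hk)
  · intro x _; exact bin_btn x
  · intro k _; rfl

lemma btn_last {t : ℕ} (w : Fin (t+1) → ZMod 2) :
    btn w = btn (fun j : Fin t => w j.castSucc) + (w (Fin.last t)).val * 2 ^ t := by
  simp [btn, Fin.sum_univ_castSucc]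

/-! #### The `±1` character -/

def χ (b : ZMod 2) : ℤ := (-1) ^ b.val

lemma chi_add (a b : ZMod 2) : χ (a + b) = χ a * χ b := by
  revert a b; decide

lemma dotp_add_right {n : ℕ} (u x y : Fin n → ZMod 2) :
    dotp u (x + y) = dotp u x + dotp u y := by
  simp [dotp, mul_add, Finset.sum_add_distrib]

lemma dotp_add_left {n : ℕ} (u v x : Fin n → ZMod 2) :
    dotp (u + v) x = dotp u x + dotp v x := by
  simp [dotp, add_mul, Finset.sum_add_distrib]

lemma dotp_single {n : ℕ} (i : Fin n) (x : Fin n → ZMod 2) :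
    dotp (Pi.single i 1) x = x i := by
  simp [dotp, Pi.single_apply, ite_mul]

lemma orth {m : ℕ} (c : Fin m → ZMod 2) :
    ∑ v : Fin m → ZMod 2, χ (dotp v c) = if c = 0 then 2 ^ m else 0 := by
  split_ifs with hc
  · subst hc
    have h1 : ∀ v : Fin m → ZMod 2, χ (dotp v 0) = 1 := by
      intro v; simp [dotp, χ]
    rw [Finset.sum_congr rfl (fun v _ => h1 v)]
    simp [Finset.card_univ]
  · obtain ⟨i, hi⟩ : ∃ i, c i ≠ 0 := by
      by_contra h; push_neg at h; exact hc (funext h)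
    apply Finset.sum_ninvolution (fun v => v + Pi.single i 1)
    · intro v
      have h2 : dotp (v + Pi.single i 1) c = dotp v c + c i := by
        rw [dotp_add_left, dotp_single]
      rw [h2]
      have h3 : ∀ a b : ZMod 2, b ≠ 0 → χ a + χ (a + b) = 0 := by decide
      exact h3 _ _ hi
    · intro v _ h
      have := congrFun h i
      simp [Pi.single_apply] at this
    · intro v; exact Finset.mem_univ _
    · intro v
      have h5 : (1 : ZMod 2) + 1 = 0 := by decide
      have h4 : (Pi.single i 1 + Pi.single i 1 : Fin m → ZMod 2) = 0 := by
        funext j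
        by_cases hj : j = i <;> simp [Pi.single_apply, hj, h5]
      rw [add_assoc, h4, add_zero]

lemma inversion {m : ℕ} (N M : (Fin m → ZMod 2) → ℤ)
    (h : ∀ v, ∑ α, χ (dotp v α) * N α = ∑ α, χ (dotp v α) * M α) :
    ∀ α, N α = M α := by
  intro β
  have hz : ∀ v, ∑ α, χ (dotp v α) * (N α - M α) = 0 := by
    intro v
    have := h v
    simp only [mul_sub, Finset.sum_sub_distrib]
    omega
  have key : ∑ v : Fin m → ZMod 2, ∑ α : Fin m → ZMod 2,
      χ (dotp v (β + α)) * (N α - M α) = 0 := by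
    apply Finset.sum_eq_zero
    intro v _
    have h5 : ∀ α : Fin m → ZMod 2, χ (dotp v (β + α)) * (N α - M α)
        = χ (dotp v β) * (χ (dotp v α) * (N α - M α)) := by
      intro α; rw [dotp_add_right, chi_add]; ring
    rw [Finset.sum_congr rfl fun α _ => h5 α, ← Finset.mul_sum, hz v, mul_zero]
  rw [Finset.sum_comm] at key
  have key2 : ∀ α : Fin m → ZMod 2,
      ∑ v : Fin m → ZMod 2, χ (dotp v (β + α)) * (N α - M α)
        = if α = β then (2:ℤ) ^ m * (N α - M α) else 0 := by
    intro α
    rw [← Finset.sum_mul, orth]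
    have hab : ∀ a b : ZMod 2, a + b = 0 ↔ b = a := by decide
    have hb : (β + α = 0) ↔ (α = β) := by
      constructor
      · intro h0; funext j; exact (hab (β j) (α j)).1 (congrFun h0 j)
      · rintro rfl; funext j; exact ((hab (α j) (α j)).2 rfl)
    by_cases hba : α = β
    · rw [if_pos (hb.mpr hba), if_pos hba]
    · rw [if_neg (fun hh => hba (hb.mp hh)), if_neg hba, zero_mul]
  rw [Finset.sum_congr rfl (fun α _ => key2 α), Finset.sum_ite_eq' Finset.univ β] at key
  simp only [Finset.mem_univ, if_true] at key
  have h2m : (2:ℤ) ^ m ≠ 0 := by positivity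
  have := mul_eq_zero.mp key
  omega

/-! #### Slices -/

def Eslice {n t : ℕ} (g : (Fin n → ZMod 2) → ZMod 2) (σ : Fin t → Fin n)
    (y : Fin t → ZMod 2) : ℤ :=
  ∑ x ∈ Finset.univ.filter (fun x : Fin n → ZMod 2 => ∀ j, x (σ j) = y j), χ (g x)

def Tot {n : ℕ} (g : (Fin n → ZMod 2) → ZMod 2) : ℤ := ∑ x, χ (g x)

lemma slice_filter_eq {n t : ℕ} (σ : Fin t → Fin n) (y : Fin t → ZMod 2) :
    (Finset.univ.filter (fun x : Fin n → ZMod 2 => ∀ j, x (σ j) = y j))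
      = Finset.univ.filter (fun x : Fin n → ZMod 2 => x ∘ σ = y) := by
  apply Finset.filter_congr
  intro x _
  simp only [funext_iff, Function.comp_apply]

lemma sum_slices {n t : ℕ} (g : (Fin n → ZMod 2) → ZMod 2) (σ : Fin t → Fin n) :
    ∑ y : Fin t → ZMod 2, Eslice g σ y = Tot g := by
  unfold Eslice Tot
  rw [Finset.sum_congr rfl (fun y _ => by rw [slice_filter_eq])]
  exact Finset.sum_fiberwise _ (fun x => x ∘ σ) (fun x => χ (g x))

lemma card_slice {n t : ℕ} {σ : Fin t → Fin n} (hσ : Function.Injective σ)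
    (y : Fin t → ZMod 2) :
    (Finset.univ.filter (fun x : Fin n → ZMod 2 => ∀ j, x (σ j) = y j)).card
      = 2 ^ (n - t) := by
  classical
  have e : {x : Fin n → ZMod 2 // ∀ j, x (σ j) = y j}
      ≃ ({i : Fin n // ¬ ∃ j, σ j = i} → ZMod 2) := by
    refine ⟨fun x i => x.1 i.1, fun u => ⟨fun i => if h : ∃ j, σ j = i then y h.choose else u ⟨i, h⟩, ?_⟩, ?_, ?_⟩
    · intro j
      have h : ∃ j', σ j' = σ j := ⟨j, rfl⟩
      simp only [h, dif_pos]
      have := h.choose_spec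
      rw [hσ this]
    · intro x
      ext i
      dsimp only
      split_ifs with h
      · rw [← x.2 h.choose, h.choose_spec]
      · rfl
    · intro u
      ext i
      simp [i.2]
  have h1 : (Finset.univ.filter (fun x : Fin n → ZMod 2 => ∀ j, x (σ j) = y j)).card
      = Fintype.card {x : Fin n → ZMod 2 // ∀ j, x (σ j) = y j} := by
    rw [Fintype.card_subtype]
  rw [h1, Fintype.card_congr e]
  have h2 : Fintype.card {i : Fin n // ¬ ∃ j, σ j = i} = n - t := by
    have h3 : Fintype.card {i : Fin n // ∃ j, σ j = i} = t := by
      have h4 : Fintype.card {i : Fin n // ∃ j, σ j = i} = Fintype.card (Set.range σ) := by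
        apply Fintype.card_congr
        exact Equiv.subtypeEquivRight (fun i => by simp [Set.mem_range])
      rw [h4, Set.card_range_of_injective hσ, Fintype.card_fin]
    have h5 := Fintype.card_subtype_compl (fun i : Fin n => ∃ j, σ j = i)
    rw [h5, h3, Fintype.card_fin]
  rw [Fintype.card_fun, h2]
  simp

lemma Eslice_comp {n t : ℕ} (g : (Fin n → ZMod 2) → ZMod 2) (σ : Fin t → Fin n)
    (τ : Equiv.Perm (Fin t)) (y : Fin t → ZMod 2) :
    Eslice g (σ ∘ τ) y = Eslice g σ (y ∘ τ.symm) := by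
  unfold Eslice
  congr 1
  apply Finset.filter_congr
  intro x _
  constructor
  · intro h j
    have := h (τ.symm j)
    simpa using this
  · intro h j
    have := h (τ j)
    simpa using this

lemma flip_connect {n t : ℕ} (g : (Fin n → ZMod 2) → ZMod 2) (σ : Fin t → Fin n)
    (h : ∀ (y : Fin t → ZMod 2) (j : Fin t),
      Eslice g σ y = Eslice g σ (Function.update y j (y j + 1)))
    (y y' : Fin t → ZMod 2) : Eslice g σ y = Eslice g σ y' := by
  classical
  generalize hD : (Finset.univ.filter fun j => y j ≠ y' j).card = d
  induction d generalizing y with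
  | zero =>
    have : y = y' := by
      funext j
      by_contra hj
      have : j ∈ Finset.univ.filter fun j => y j ≠ y' j := by simp [hj]
      rw [Finset.card_eq_zero.mp hD] at this
      simp at this
    rw [this]
  | succ d ih =>
    have hne : (Finset.univ.filter fun j => y j ≠ y' j).Nonempty := by
      rw [← Finset.card_pos, hD]; omega
    obtain ⟨j, hj⟩ := hne
    simp only [Finset.mem_filter] at hj
    set y'' := Function.update y j (y j + 1) with hy''
    have step : Eslice g σ y = Eslice g σ y'' := h y j
    have hj2 : y'' j = y' j := by
      have h1 : ∀ a b : ZMod 2, a ≠ b → a + 1 = b := by decide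
      simp [hy'', Function.update_self]
      exact h1 _ _ hj.2
    have hcard : (Finset.univ.filter fun i => y'' i ≠ y' i).card = d := by
      have hsub : (Finset.univ.filter fun i => y'' i ≠ y' i)
          = (Finset.univ.filter fun i => y i ≠ y' i).erase j := by
        ext i
        simp only [Finset.mem_filter, Finset.mem_erase, Finset.mem_univ, true_and]
        by_cases hij : i = j
        · subst hij; simp [hj2]
        · simp [hy'', Function.update_of_ne hij, hij]
      rw [hsub, Finset.card_erase_of_mem (by simp [hj.2]), hD]
      omega
    rw [step, ih y'' hcard]

lemma exists_perm {n t : ℕ} (htn : t ≤ n) {σ : Fin t → Fin n}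
    (hσ : Function.Injective σ) :
    ∃ π : Equiv.Perm (Fin n), ∀ j, π (σ j) = Fin.castLE htn j := by
  classical
  have hc : Function.Injective (Fin.castLE htn) := Fin.castLE_injective htn
  let p : Fin n → Prop := fun i => i ∈ Set.range σ
  let q : Fin n → Prop := fun i => i ∈ Set.range (Fin.castLE htn)
  let e1 : Fin t ≃ {i // p i} := Equiv.ofInjective σ hσ
  let e2 : Fin t ≃ {i // q i} := Equiv.ofInjective _ hc
  have hcard : Fintype.card {i // ¬ p i} = Fintype.card {i // ¬ q i} := by
    rw [Fintype.card_subtype_compl, Fintype.card_subtype_compl]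
    congr 1
    · rw [Fintype.card_congr e1.symm, Fintype.card_congr e2.symm]
  let ec : {i // ¬ p i} ≃ {i // ¬ q i} := Fintype.equivOfCardEq hcard
  let π : Equiv.Perm (Fin n) :=
    (Equiv.sumCompl p).symm.trans
      ((Equiv.sumCongr (e1.symm.trans e2) ec).trans (Equiv.sumCompl q))
  refine ⟨π, fun j => ?_⟩
  have hp : p (σ j) := ⟨j, rfl⟩
  have h1 : (Equiv.sumCompl p).symm (σ j) = Sum.inl ⟨σ j, hp⟩ :=
    Equiv.sumCompl_symm_apply_of_pos hp
  simp only [π, Equiv.trans_apply, h1, Equiv.sumCongr_apply, Sum.map_inl]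
  have h2 : e1.symm ⟨σ j, hp⟩ = j := by
    apply e1.injective
    simp only [Equiv.apply_symm_apply]
    rfl
  rw [h2]
  rfl

/-! #### Roots of unity -/

lemma omega_ne_zero (i : ℕ) : ω i ≠ 0 := Complex.exp_ne_zero _

lemma omega_pow {i : ℕ} (a : ℕ) : ω i ^ a = Complex.exp (a * (2 * Real.pi * Complex.I / 2 ^ i)) := by
  rw [ω, ← Complex.exp_nat_mul]

lemma two_pow_ne {i : ℕ} : ((2:ℂ)) ^ i ≠ 0 := pow_ne_zero _ two_ne_zero

lemma omega_pow_of_le {t n : ℕ} (htn : t ≤ n) : ω n ^ (2 ^ (n - t)) = ω t := by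
  rw [omega_pow, ω]
  congr 1
  have key : (2:ℂ) ^ (n - t) * 2 ^ t = 2 ^ n := by
    rw [← pow_add]; congr 1; omega
  push_cast
  rw [mul_div_assoc', div_eq_div_iff two_pow_ne two_pow_ne,
    mul_comm (2 * (Real.pi:ℂ) * Complex.I) ((2:ℂ)^n), ← key]
  ring

lemma omega_pow_card (t : ℕ) : ω t ^ (2 ^ t : ℕ) = 1 := by
  rw [omega_pow]
  have e : ((2 ^ t : ℕ) : ℂ) * (2 * Real.pi * Complex.I / 2 ^ t) = 2 * Real.pi * Complex.I := by
    push_cast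
    field_simp
  rw [e, Complex.exp_two_pi_mul_I]

lemma omega_pow_half {t : ℕ} (ht : 0 < t) : ω t ^ (2 ^ (t - 1) : ℕ) = -1 := by
  rw [omega_pow]
  have e : ((2 ^ (t - 1) : ℕ) : ℂ) * (2 * Real.pi * Complex.I / 2 ^ t) = Real.pi * Complex.I := by
    push_cast
    rw [mul_div_assoc', div_eq_iff two_pow_ne]
    have h2 : (2:ℂ) ^ t = 2 ^ (t-1) * 2 := by
      rw [← pow_succ]; congr 1; omega
    rw [h2]; ring
  rw [e, Complex.exp_pi_mul_I]

lemma omega_zpow_reduce {t n : ℕ} (htn : t ≤ n) (k : ℕ) :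
    ω n ^ (-(k * 2 ^ (n - t) : ℤ)) = ω t ^ (-((k % 2 ^ t : ℕ) : ℤ)) := by
  have hk := Nat.div_add_mod k (2 ^ t)
  have e1 : (-(k * 2 ^ (n - t) : ℤ))
      = (2 ^ n : ℤ) * (-(k / 2 ^ t : ℕ)) + (2 ^ (n - t) : ℤ) * (-(k % 2 ^ t : ℕ)) := by
    have e2 : (2:ℤ) ^ n = 2 ^ (n - t) * 2 ^ t := by
      rw [← pow_add]; congr 1; omega
    rw [e2]
    have e3 : (k : ℤ) = 2 ^ t * (k / 2 ^ t : ℕ) + (k % 2 ^ t : ℕ) := by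
      exact_mod_cast hk.symm
    rw [e3]; ring
  rw [e1, zpow_add₀ (omega_ne_zero n), zpow_mul, zpow_mul]
  have h1 : ω n ^ ((2:ℤ) ^ n) = 1 := by
    have := omega_pow_card n
    rw [← zpow_natCast (ω n) (2 ^ n)] at this
    rw [← this]
    congr 1
  have h2 : ω n ^ ((2:ℤ) ^ (n - t)) = ω t := by
    have := omega_pow_of_le htn
    rw [← zpow_natCast (ω n) (2 ^ (n - t))] at this
    rw [← this]
    congr 1
  rw [h1, h2, one_zpow, one_mul]

lemma omega_primitive (t : ℕ) : IsPrimitiveRoot (ω t) (2 ^ t) := by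
  have h := Complex.isPrimitiveRoot_exp (2 ^ t) (by positivity)
  have e : Complex.exp (2 * Real.pi * Complex.I / (2 ^ t : ℕ)) = ω t := by
    rw [ω]; congr 1; push_cast; ring
  rwa [e] at h

lemma indep {t : ℕ} (ht : 0 < t) (c : ℕ → ℤ) :
    (∑ r ∈ Finset.range (2 ^ t), (c r : ℂ) * ω t ^ (-(r : ℤ)) = 0)
      ↔ ∀ r < 2 ^ (t - 1), c r = c (r + 2 ^ (t - 1)) := by
  set h := 2 ^ (t - 1) with hh
  have h2t : 2 ^ t = h + h := by
    rw [hh, ← two_mul, ← pow_succ']; congr 1; omega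
  have hωh : ω t ^ (-(h:ℤ)) = -1 := by
    rw [zpow_neg, zpow_natCast, hh, omega_pow_half ht]
    norm_num
  have split : ∑ r ∈ Finset.range (2 ^ t), (c r : ℂ) * ω t ^ (-(r : ℤ))
      = ∑ r ∈ Finset.range h, ((c r - c (r + h) : ℤ) : ℂ) * ω t ^ (-(r : ℤ)) := by
    rw [h2t, Finset.sum_range_add]
    have e : ∀ r, (c (h + r) : ℂ) * ω t ^ (-((h + r : ℕ) : ℤ))
        = -((c (r + h) : ℂ) * ω t ^ (-(r:ℤ))) := by
      intro r
      have e4 : (-((h + r : ℕ) : ℤ)) = (-(h:ℤ)) + (-(r:ℤ)) := by push_cast; ring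
      rw [e4, zpow_add₀ (omega_ne_zero t), hωh]
      rw [Nat.add_comm h r]
      ring
    rw [Finset.sum_congr rfl (fun r _ => e r), ← Finset.sum_add_distrib]
    apply Finset.sum_congr rfl
    intro r _
    push_cast
    ring
  rw [split]
  constructor
  · intro h0 r hr
    set η := (ω t)⁻¹ with hη
    have hηprim : IsPrimitiveRoot η (2 ^ t) := (omega_primitive t).inv
    have hsum : ∑ r ∈ Finset.range h, ((c r - c (r + h) : ℤ) : ℂ) * η ^ r = 0 := by
      rw [← h0]
      apply Finset.sum_congr rfl
      intro r _
      congr 1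
      rw [hη, inv_pow, ← zpow_natCast, ← zpow_neg]
    set p : Polynomial ℚ := ∑ r ∈ Finset.range h, Polynomial.C ((c r - c (r + h) : ℤ) : ℚ) * Polynomial.X ^ r with hp
    have haev : Polynomial.aeval η p = 0 := by
      rw [hp]
      rw [map_sum]
      rw [← hsum]
      apply Finset.sum_congr rfl
      intro r _
      rw [map_mul, map_pow, Polynomial.aeval_X, Polynomial.aeval_C]
      norm_num
    by_contra hne
    have hpne : p ≠ 0 := by
      intro hz
      apply hne
      have hc := congrArg (fun q => Polynomial.coeff q r) hz
      simp only [hp] at hc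
      rw [Polynomial.finset_sum_coeff] at hc
      simp only [Polynomial.coeff_C_mul, Polynomial.coeff_X_pow, mul_ite, mul_one, mul_zero] at hc
      rw [Finset.sum_ite_eq (Finset.range h) r] at hc
      simp [Finset.mem_range.mpr hr] at hc
      have h9 : ((c r : ℚ)) = c (r + h) := by linarith [hc]
      exact_mod_cast h9
    have hdvd : minpoly ℚ η ∣ p := minpoly.dvd ℚ η haev
    have hdeg1 : (minpoly ℚ η).natDegree = h := by
      rw [← Polynomial.cyclotomic_eq_minpoly_rat hηprim (by positivity)]
      rw [Polynomial.natDegree_cyclotomic]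
      rw [Nat.totient_prime_pow Nat.prime_two ht]
      simp [hh]
    have hdeg2 : p.natDegree < h := by
      have hb : p.natDegree ≤ h - 1 := by
        rw [hp]
        apply Polynomial.natDegree_sum_le_of_forall_le
        intro i hi
        apply le_trans (Polynomial.natDegree_C_mul_le _ _)
        simp only [Polynomial.natDegree_X_pow]
        exact Nat.le_sub_one_of_lt (Finset.mem_range.mp hi)
      have hpos : 0 < h := by positivity
      omega
    have := Polynomial.natDegree_le_of_dvd hdvd hpne
    omega
  · intro hc
    apply Finset.sum_eq_zero
    intro r hr
    rw [hc r (Finset.mem_range.mp hr)]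
    simp

/-! #### Independence at the level of bit-vectors -/

lemma sum_w_zero_iff {t : ℕ} (ht : 0 < t) (D : (Fin t → ZMod 2) → ℤ)
    (j₀ : Fin t) (hj₀ : (j₀ : ℕ) = t - 1) :
    (∑ w : Fin t → ZMod 2, ((D w : ℤ) : ℂ) * ω t ^ (-(btn w : ℤ)) = 0)
      ↔ ∀ w, D w = D (Function.update w j₀ (w j₀ + 1)) := by
  obtain ⟨t', rfl⟩ : ∃ t', t = t' + 1 := ⟨t - 1, by omega⟩
  have hj : j₀ = Fin.last t' := Fin.ext (by simpa using hj₀)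
  subst hj
  have hsum : ∑ w : Fin (t'+1) → ZMod 2, ((D w : ℤ) : ℂ) * ω (t'+1) ^ (-(btn w : ℤ))
      = ∑ r ∈ Finset.range (2 ^ (t'+1)), ((D (bin (t'+1) r) : ℤ) : ℂ) * ω (t'+1) ^ (-(r : ℤ)) := by
    rw [← sum_bin (n := t'+1) (F := fun w => ((D w : ℤ) : ℂ) * ω (t'+1) ^ (-(btn w : ℤ)))]
    apply Finset.sum_congr rfl
    intro r hr
    rw [btn_bin (Finset.mem_range.mp hr)]
  rw [hsum, indep (by omega) (fun r => D (bin (t'+1) r))]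
  have hupdate_castSucc : ∀ (w : Fin (t'+1) → ZMod 2) (c : ZMod 2) (j : Fin t'),
      Function.update w (Fin.last t') c j.castSucc = w j.castSucc := by
    intro w c j
    apply Function.update_of_ne
    exact (Fin.castSucc_lt_last j).ne
  constructor
  · intro hr w
    set u : Fin t' → ZMod 2 := fun j => w j.castSucc with hu
    set r := btn u with hrdef
    have hru : r < 2 ^ t' := btn_lt u
    set w0 := Function.update w (Fin.last t') 0 with hw0
    set w1 := Function.update w (Fin.last t') 1 with hw1
    have hbtn0 : btn w0 = r := by
      rw [btn_last]
      have e1 : (fun j : Fin t' => w0 j.castSucc) = u := by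
        funext j; rw [hw0, hupdate_castSucc]
      rw [e1, hw0, Function.update_self]
      simp [hrdef]
    have hbtn1 : btn w1 = r + 2 ^ t' := by
      rw [btn_last]
      have e1 : (fun j : Fin t' => w1 j.castSucc) = u := by
        funext j; rw [hw1, hupdate_castSucc]
      rw [e1, hw1, Function.update_self]
      have hv1 : (1 : ZMod 2).val = 1 := by decide
      rw [hv1, one_mul, hrdef]
    have h0 : bin (t'+1) r = w0 := by rw [← hbtn0, bin_btn]
    have h1 : bin (t'+1) (r + 2 ^ (t'+1-1)) = w1 := by
      have : t'+1-1 = t' := rfl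
      rw [this, ← hbtn1, bin_btn]
    have hD : D w0 = D w1 := by
      have := hr r (by simpa using hru)
      rw [h0, h1] at this
      exact this
    have hcase : w (Fin.last t') = 0 ∨ w (Fin.last t') = 1 := by
      have : ∀ a : ZMod 2, a = 0 ∨ a = 1 := by decide
      exact this _
    cases hcase with
    | inl hcc =>
      have hww : w = w0 := by
        funext i
        by_cases hi : i = Fin.last t'
        · subst hi; rw [hw0, Function.update_self, hcc]
        · rw [hw0, Function.update_of_ne hi]
      have hflip : Function.update w (Fin.last t') (w (Fin.last t') + 1) = w1 := by
        rw [hcc, zero_add]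
      rw [hflip, hww]
      exact hD
    | inr hcc =>
      have hww : w = w1 := by
        funext i
        by_cases hi : i = Fin.last t'
        · subst hi; rw [hw1, Function.update_self, hcc]
        · rw [hw1, Function.update_of_ne hi]
      have hflip : Function.update w (Fin.last t') (w (Fin.last t') + 1) = w0 := by
        rw [hcc]
        have : (1 : ZMod 2) + 1 = 0 := by decide
        rw [this]
      rw [hflip, hww]
      exact hD.symm
  · intro hw r hrlt
    have hrlt' : r < 2 ^ t' := by simpa using hrlt
    set w := bin (t'+1) r with hwdef
    have hr2 : r < 2 ^ (t'+1) := lt_of_lt_of_le hrlt' (by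
      apply pow_le_pow_right₀ <;> omega)
    have hbw : btn w = r := by rw [hwdef]; exact btn_bin hr2
    have hw1 : w (Fin.last t') = 0 := by
      have hd : r / 2 ^ t' = 0 := Nat.div_eq_of_lt hrlt'
      have := bin_apply (t'+1) r (Fin.last t')
      simp only [Fin.val_last] at this
      rw [hd] at this
      have hv : (w (Fin.last t')).val = 0 := by rw [hwdef]; simpa using this
      have : ∀ a : ZMod 2, a.val = 0 → a = 0 := by decide
      exact this _ hv
    have hkey := hw w
    have hbu : btn (fun j : Fin t' => w j.castSucc) = r := by
      have := btn_last w
      rw [hw1] at this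
      simpa [hbw] using this.symm
    have hflipbtn : btn (Function.update w (Fin.last t') (w (Fin.last t') + 1)) = r + 2 ^ t' := by
      rw [btn_last]
      have e1 : (fun j : Fin t' => Function.update w (Fin.last t') (w (Fin.last t') + 1) j.castSucc)
          = fun j : Fin t' => w j.castSucc := by
        funext j; rw [hupdate_castSucc]
      rw [e1, hbu, Function.update_self, hw1, zero_add]
      have hv1 : (1 : ZMod 2).val = 1 := by decide
      rw [hv1, one_mul]
    have hbin2 : bin (t'+1) (r + 2 ^ (t'+1-1))
        = Function.update w (Fin.last t') (w (Fin.last t') + 1) := by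
      have e0 : t'+1-1 = t' := rfl
      rw [e0, ← hflipbtn, bin_btn]
    show D (bin (t'+1) r) = D (bin (t'+1) (r + 2 ^ (t'+1-1)))
    rw [← hwdef, hbin2]
    exact hkey

end Aux

/-! ### The σ-form of correlation immunity -/

section Main

/-- σ-form of correlation immunity (counting). -/
def CIs {n m t : ℕ} (f : (Fin n → ZMod 2) → (Fin m → ZMod 2)) : Prop :=
  ∀ σ : Fin t → Fin n, Function.Injective σ → ∀ y : Fin t → ZMod 2, ∀ α,
    2 ^ t * (Finset.univ.filter
        (fun x : Fin n → ZMod 2 => f x = α ∧ ∀ j, x (σ j) = y j)).card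
      = (Finset.univ.filter (fun x : Fin n → ZMod 2 => f x = α)).card

lemma natcard_eq {n : ℕ} (p : (Fin n → ZMod 2) → Prop) [DecidablePred p] :
    Nat.card {x : Fin n → ZMod 2 // p x} = (Finset.univ.filter p).card := by
  rw [Nat.card_eq_fintype_card, Fintype.card_subtype]

lemma CI_iff_CIs {n m t : ℕ} (f : (Fin n → ZMod 2) → (Fin m → ZMod 2)) :
    CI t f ↔ CIs (t := t) f := by
  classical
  constructor
  · intro h σ hσ y α
    set S : Finset (Fin n) := Finset.univ.image σ with hS
    have hcard : S.card = t := by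
      rw [hS, Finset.card_image_of_injective _ hσ, Finset.card_univ, Fintype.card_fin]
    set a : Fin n → ZMod 2 :=
      fun i => if h : ∃ j, σ j = i then y h.choose else 0 with ha
    have key := h S hcard a α
    rw [natcard_eq, natcard_eq] at key
    have hpred : ∀ x : Fin n → ZMod 2,
        (f x = α ∧ ∀ j ∈ S, x j = a j) ↔ (f x = α ∧ ∀ j, x (σ j) = y j) := by
      intro x
      apply and_congr_right
      intro _
      constructor
      · intro hx j
        have hmem : σ j ∈ S := by simp [hS]
        have := hx (σ j) hmem
        rw [this, ha]
        have hex : ∃ j', σ j' = σ j := ⟨j, rfl⟩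
        simp only [hex, dif_pos]
        rw [hσ hex.choose_spec]
      · intro hx j hj
        rw [hS, Finset.mem_image] at hj
        obtain ⟨j', _, hj'⟩ := hj
        have hex : ∃ j'', σ j'' = j := ⟨j', hj'⟩
        rw [ha]
        simp only [hex, dif_pos]
        rw [← hx hex.choose, hex.choose_spec]
    have e : Finset.univ.filter (fun x : Fin n → ZMod 2 => f x = α ∧ ∀ j ∈ S, x j = a j)
        = Finset.univ.filter (fun x => f x = α ∧ ∀ j, x (σ j) = y j) := by
      apply Finset.filter_congr
      intro x _
      simp only [hpred x]
    rw [e] at key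
    exact key
  · intro h S hS a α
    set σ : Fin t → Fin n := fun j => (S.orderIsoOfFin hS j : Fin n) with hσdef
    have hσ : Function.Injective σ := by
      intro a b hab
      exact (S.orderIsoOfFin hS).injective (Subtype.ext hab)
    have key := h σ hσ (fun j => a (σ j)) α
    rw [natcard_eq, natcard_eq]
    have hpred : ∀ x : Fin n → ZMod 2,
        (f x = α ∧ ∀ j, x (σ j) = a (σ j)) ↔ (f x = α ∧ ∀ j ∈ S, x j = a j) := by
      intro x
      apply and_congr_right
      intro _
      constructor
      · intro hx j hj
        have hj2 : j = σ ((S.orderIsoOfFin hS).symm ⟨j, hj⟩) := by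
          show j = ((S.orderIsoOfFin hS) ((S.orderIsoOfFin hS).symm ⟨j, hj⟩) : Fin n)
          rw [OrderIso.apply_symm_apply]
        rw [hj2]
        exact hx _
      · intro hx j
        have hmem : σ j ∈ S := (S.orderIsoOfFin hS j).2
        exact hx _ hmem
    have e : Finset.univ.filter (fun x : Fin n → ZMod 2 => f x = α ∧ ∀ j, x (σ j) = a (σ j))
        = Finset.univ.filter (fun x => f x = α ∧ ∀ j ∈ S, x j = a j) := by
      apply Finset.filter_congr
      intro x _
      simp only [hpred x]
    rw [e] at key
    exact key

/-! #### Fourier transform over the output space -/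

lemma transform_N {n m t : ℕ} (f : (Fin n → ZMod 2) → (Fin m → ZMod 2))
    (σ : Fin t → Fin n) (y : Fin t → ZMod 2) (v : Fin m → ZMod 2) :
    ∑ α : Fin m → ZMod 2, χ (dotp v α) *
        ((Finset.univ.filter
          (fun x : Fin n → ZMod 2 => f x = α ∧ ∀ j, x (σ j) = y j)).card : ℤ)
      = Eslice (fun x => dotp v (f x)) σ y := by
  classical
  unfold Eslice
  rw [← Finset.sum_fiberwise (Finset.univ.filter
      (fun x : Fin n → ZMod 2 => ∀ j, x (σ j) = y j)) f (fun x => χ (dotp v (f x)))]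
  apply Finset.sum_congr rfl
  intro α _
  have e : (Finset.univ.filter (fun x : Fin n → ZMod 2 => ∀ j, x (σ j) = y j)).filter
      (fun x => f x = α)
      = Finset.univ.filter (fun x : Fin n → ZMod 2 => f x = α ∧ ∀ j, x (σ j) = y j) := by
    rw [Finset.filter_filter]
    apply Finset.filter_congr
    intro x _
    exact and_comm
  rw [e]
  have hval : ∀ x ∈ Finset.univ.filter
      (fun x : Fin n → ZMod 2 => f x = α ∧ ∀ j, x (σ j) = y j),
      χ (dotp v (f x)) = χ (dotp v α) := by
    intro x hx
    rw [(Finset.mem_filter.mp hx).2.1]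
  rw [Finset.sum_congr rfl hval, Finset.sum_const, nsmul_eq_mul, mul_comm]

lemma transform_M {n m : ℕ} (f : (Fin n → ZMod 2) → (Fin m → ZMod 2))
    (v : Fin m → ZMod 2) :
    ∑ α : Fin m → ZMod 2, χ (dotp v α) *
        ((Finset.univ.filter (fun x : Fin n → ZMod 2 => f x = α)).card : ℤ)
      = Tot (fun x => dotp v (f x)) := by
  classical
  unfold Tot
  rw [← Finset.sum_fiberwise (Finset.univ) f (fun x => χ (dotp v (f x)))]
  apply Finset.sum_congr rfl
  intro α _
  have hval : ∀ x ∈ Finset.univ.filter (fun x : Fin n → ZMod 2 => f x = α),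
      χ (dotp v (f x)) = χ (dotp v α) := by
    intro x hx
    rw [(Finset.mem_filter.mp hx).2]
  rw [Finset.sum_congr rfl hval, Finset.sum_const, nsmul_eq_mul, mul_comm]

lemma CIs_iff_P2 {n m t : ℕ} (f : (Fin n → ZMod 2) → (Fin m → ZMod 2)) :
    CIs (t := t) f ↔ ∀ v : Fin m → ZMod 2, ∀ σ : Fin t → Fin n,
      Function.Injective σ → ∀ y : Fin t → ZMod 2,
        2 ^ t * Eslice (fun x => dotp v (f x)) σ y = Tot (fun x => dotp v (f x)) := by
  classical
  constructor
  · intro h v σ hσ y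
    rw [← transform_N, ← transform_M, Finset.mul_sum]
    apply Finset.sum_congr rfl
    intro α _
    have key := h σ hσ y α
    have keyz : ((2:ℤ) ^ t) * ((Finset.univ.filter
        (fun x : Fin n → ZMod 2 => f x = α ∧ ∀ j, x (σ j) = y j)).card : ℤ)
        = ((Finset.univ.filter (fun x : Fin n → ZMod 2 => f x = α)).card : ℤ) := by
      exact_mod_cast key
    rw [← keyz]
    ring
  · intro h σ hσ y α
    have hinv := inversion
      (fun α => (2:ℤ) ^ t * ((Finset.univ.filter
        (fun x : Fin n → ZMod 2 => f x = α ∧ ∀ j, x (σ j) = y j)).card : ℤ))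
      (fun α => ((Finset.univ.filter (fun x : Fin n → ZMod 2 => f x = α)).card : ℤ))
      (by
        intro v
        have e1 : ∑ α : Fin m → ZMod 2, χ (dotp v α) *
            ((2:ℤ) ^ t * ((Finset.univ.filter
              (fun x : Fin n → ZMod 2 => f x = α ∧ ∀ j, x (σ j) = y j)).card : ℤ))
            = 2 ^ t * ∑ α : Fin m → ZMod 2, χ (dotp v α) *
              ((Finset.univ.filter
                (fun x : Fin n → ZMod 2 => f x = α ∧ ∀ j, x (σ j) = y j)).card : ℤ) := by
          rw [Finset.mul_sum]
          apply Finset.sum_congr rfl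
          intro α _
          ring
        rw [e1, transform_N, transform_M, h v σ hσ y])
    have hfin := hinv α
    exact_mod_cast hfin

/-! #### The Fourier sum over inputs -/

lemma fourier_eq {n m t : ℕ} (htn : t ≤ n) (f : (Fin n → ZMod 2) → (Fin m → ZMod 2))
    (v : Fin m → ZMod 2) (π : Equiv.Perm (Fin n)) :
    ∑ k ∈ Finset.range (2 ^ n),
        (-1 : ℂ) ^ (∑ i, v i * f (fun j => bin n k (π j)) i).val *
          ω n ^ (-(k * 2 ^ (n - t) : ℤ))
      = ∑ w : Fin t → ZMod 2,
          ((Eslice (fun x => dotp v (f x)) (fun j => π.symm (Fin.castLE htn j)) w : ℤ) : ℂ)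
            * ω t ^ (-(btn w : ℤ)) := by
  classical
  have step1 : ∀ k ∈ Finset.range (2 ^ n),
      (-1 : ℂ) ^ (∑ i, v i * f (fun j => bin n k (π j)) i).val *
          ω n ^ (-(k * 2 ^ (n - t) : ℤ))
        = (fun x : Fin n → ZMod 2 =>
            (-1 : ℂ) ^ (dotp v (f (fun j => x (π j)))).val *
              ω t ^ (-(btn (fun j : Fin t => x (Fin.castLE htn j)) : ℤ))) (bin n k) := by
    intro k _
    rw [omega_zpow_reduce htn k, mod_eq_btn htn k]
    rfl
  rw [Finset.sum_congr rfl step1,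
    sum_bin (F := fun x : Fin n → ZMod 2 =>
      (-1 : ℂ) ^ (dotp v (f (fun j => x (π j)))).val *
        ω t ^ (-(btn (fun j : Fin t => x (Fin.castLE htn j)) : ℤ)))]
  rw [← Finset.sum_fiberwise Finset.univ
    (fun x : Fin n → ZMod 2 => (fun j : Fin t => x (Fin.castLE htn j)))
    (fun x : Fin n → ZMod 2 =>
      (-1 : ℂ) ^ (dotp v (f (fun j => x (π j)))).val *
        ω t ^ (-(btn (fun j : Fin t => x (Fin.castLE htn j)) : ℤ)))]
  apply Finset.sum_congr rfl
  intro w _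
  have step2 : ∀ x ∈ Finset.univ.filter
      (fun x : Fin n → ZMod 2 => (fun j : Fin t => x (Fin.castLE htn j)) = w),
      (-1 : ℂ) ^ (dotp v (f (fun j => x (π j)))).val *
          ω t ^ (-(btn (fun j : Fin t => x (Fin.castLE htn j)) : ℤ))
        = (-1 : ℂ) ^ (dotp v (f (fun j => x (π j)))).val * ω t ^ (-(btn w : ℤ)) := by
    intro x hx
    rw [(Finset.mem_filter.mp hx).2]
  rw [Finset.sum_congr rfl step2, ← Finset.sum_mul]
  congr 1
  have cast1 : ((Eslice (fun x => dotp v (f x)) (fun j => π.symm (Fin.castLE htn j)) w : ℤ) : ℂ)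
      = ∑ z ∈ Finset.univ.filter
          (fun z : Fin n → ZMod 2 => ∀ j, z (π.symm (Fin.castLE htn j)) = w j),
          (-1 : ℂ) ^ (dotp v (f z)).val := by
    unfold Eslice
    push_cast [χ]
    rfl
  rw [cast1]
  apply Finset.sum_nbij' (i := fun x => (fun j => x (π j)))
    (j := fun z => (fun i => z (π.symm i)))
  · intro x hx
    rw [Finset.mem_filter] at hx ⊢
    refine ⟨Finset.mem_univ _, fun j => ?_⟩
    show x (π (π.symm (Fin.castLE htn j))) = w j
    rw [Equiv.apply_symm_apply]
    exact congrFun hx.2 j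
  · intro z hz
    rw [Finset.mem_filter] at hz ⊢
    refine ⟨Finset.mem_univ _, funext fun j => ?_⟩
    exact hz.2 j
  · intro x _
    funext i
    show x (π (π.symm i)) = x i
    rw [Equiv.apply_symm_apply]
  · intro z _
    funext i
    show z (π.symm (π i)) = z i
    rw [Equiv.symm_apply_apply]
  · intro x _
    rfl

/-! #### From constancy of slice sums -/

lemma const_imp {n t : ℕ} (g : (Fin n → ZMod 2) → ZMod 2) (σ : Fin t → Fin n)
    (hflip : ∀ (y : Fin t → ZMod 2) (j : Fin t),
      Eslice g σ y = Eslice g σ (Function.update y j (y j + 1))) :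
    ∀ y, 2 ^ t * Eslice g σ y = Tot g := by
  intro y
  have hconst := flip_connect g σ hflip
  have hsum := sum_slices g σ
  have e : ∑ y' : Fin t → ZMod 2, Eslice g σ y' = ∑ _y' : Fin t → ZMod 2, Eslice g σ y :=
    Finset.sum_congr rfl (fun y' _ => hconst y' y)
  rw [e, Finset.sum_const, Finset.card_univ, Fintype.card_fun, ZMod.card,
    Fintype.card_fin, nsmul_eq_mul] at hsum
  rw [← hsum]
  norm_cast

end Main

/-- A multi-output Boolean function `f : 𝔽₂ⁿ → 𝔽₂^m` is `t`-th order correlation-immune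
iff `ℱ_{π·(v·f)}(2^{n-t}) = 0` for all nonzero `v` and all permutations `π`. -/
theorem stmt3 (n m t : ℕ) (hn : 0 < n) (hm : 0 < m) (ht : 0 < t) (htn : t ≤ n)
    (f : (Fin n → ZMod 2) → (Fin m → ZMod 2)) :
    CI t f ↔ ∀ v : Fin m → ZMod 2, v ≠ 0 → ∀ π : Equiv.Perm (Fin n),
      ∑ k ∈ Finset.range (2 ^ n),
        (-1 : ℂ) ^ (∑ i, v i * f (fun j => bin n k (π j)) i).val *
          ω n ^ (-(k * 2 ^ (n - t) : ℤ)) = 0 := by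
  classical
  have h2t : ((2:ℤ) ^ t) ≠ 0 := by positivity
  constructor
  · intro hCI v hv π
    have hP2 := (CIs_iff_P2 (t := t) f).mp ((CI_iff_CIs (t := t) f).mp hCI)
    rw [fourier_eq htn f v π,
      sum_w_zero_iff ht _ (⟨t - 1, by omega⟩ : Fin t) rfl]
    intro w
    have h1 := hP2 v (fun j => π.symm (Fin.castLE htn j))
      (fun a b hab => (Fin.castLE_injective htn) (π.symm.injective hab)) w
    have h2 := hP2 v (fun j => π.symm (Fin.castLE htn j))
      (fun a b hab => (Fin.castLE_injective htn) (π.symm.injective hab))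
      (Function.update w ⟨t - 1, by omega⟩ (w ⟨t - 1, by omega⟩ + 1))
    exact mul_left_cancel₀ h2t (h1.trans h2.symm)
  · intro h
    rw [CI_iff_CIs]
    apply (CIs_iff_P2 (t := t) f).mpr
    intro v σ hσ y
    by_cases hv : v = 0
    · subst hv
      have hg0 : ∀ x : Fin n → ZMod 2, dotp (0 : Fin m → ZMod 2) (f x) = 0 := by
        intro x; simp [dotp]
      have hchi : ∀ x : Fin n → ZMod 2, χ (dotp (0 : Fin m → ZMod 2) (f x)) = 1 := by
        intro x
        rw [hg0 x]
        decide
      have e1 : Eslice (fun x => dotp (0 : Fin m → ZMod 2) (f x)) σ y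
          = (2 ^ (n - t) : ℤ) := by
        calc Eslice (fun x => dotp (0 : Fin m → ZMod 2) (f x)) σ y
            = ∑ x ∈ Finset.univ.filter (fun x : Fin n → ZMod 2 => ∀ j, x (σ j) = y j),
                χ (dotp (0 : Fin m → ZMod 2) (f x)) := rfl
          _ = ∑ _x ∈ Finset.univ.filter (fun x : Fin n → ZMod 2 => ∀ j, x (σ j) = y j),
                (1 : ℤ) := Finset.sum_congr rfl (fun x _ => hchi x)
          _ = (2 ^ (n - t) : ℤ) := by
              rw [Finset.sum_const, card_slice hσ y]; simp
      have e2 : Tot (fun x => dotp (0 : Fin m → ZMod 2) (f x)) = (2 ^ n : ℤ) := by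
        calc Tot (fun x => dotp (0 : Fin m → ZMod 2) (f x))
            = ∑ x : Fin n → ZMod 2, χ (dotp (0 : Fin m → ZMod 2) (f x)) := rfl
          _ = ∑ _x : Fin n → ZMod 2, (1 : ℤ) := Finset.sum_congr rfl (fun x _ => hchi x)
          _ = (2 ^ n : ℤ) := by
              rw [Finset.sum_const, Finset.card_univ, Fintype.card_fun, ZMod.card,
                Fintype.card_fin]
              simp
      rw [e1, e2, ← pow_add]
      congr 1
      omega
    · apply const_imp
      intro y' j
      set g := fun x => dotp v (f x) with hg
      set j₀ : Fin t := ⟨t - 1, by omega⟩ with hj₀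
      set τ : Equiv.Perm (Fin t) := Equiv.swap j j₀ with hτ
      obtain ⟨π, hπ⟩ := exists_perm htn (hσ.comp τ.injective)
      have hσπ : (fun j' => π.symm (Fin.castLE htn j')) = σ ∘ τ := by
        funext j'
        rw [← hπ j', Equiv.symm_apply_apply]
      have h0 := h v hv π
      rw [fourier_eq htn f v π, hσπ] at h0
      have hall := (sum_w_zero_iff ht (fun w => Eslice g (σ ∘ τ) w) j₀ rfl).mp h0
      have key := hall (y' ∘ τ)
      rw [Eslice_comp, Eslice_comp] at key
      have e1 : (y' ∘ τ) ∘ ⇑τ.symm = y' := by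
        funext i
        simp
      have e2 : (Function.update (y' ∘ ⇑τ) j₀ ((y' ∘ ⇑τ) j₀ + 1)) ∘ ⇑τ.symm
          = Function.update y' j (y' j + 1) := by
        funext i
        by_cases hi : i = j
        · subst hi
          have hτs : τ.symm i = j₀ := by
            rw [hτ, Equiv.symm_swap, Equiv.swap_apply_left]
          rw [Function.comp_apply, hτs, Function.update_self, Function.update_self]
          congr 2
          rw [Function.comp_apply, hτ, Equiv.swap_apply_right]
        · have hτs : τ.symm i ≠ j₀ := by
            rw [hτ, Equiv.symm_swap]
            intro hh
            apply hi
            have := congrArg (Equiv.swap j j₀) hh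
            rw [Equiv.swap_apply_self, Equiv.swap_apply_right] at this
            exact this
          rw [Function.comp_apply, Function.update_of_ne hτs,
            Function.update_of_ne hi, Function.comp_apply, Equiv.apply_symm_apply]
      rw [e1, e2] at key
      exact key
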